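/- For every r ≥ 1 and any two infinite sets A and B, the symmetric shift graphs Sh_r^{sym}(A) and Sh_r^{sym}(B), viewed as structures in the first-order language of graphs, are elementarily equivalent. -/

import Mathlib

open Cardinal

/-- `t` is the shift of `s`: `s_i = t_{i-1}` for all `1 ≤ i ≤ r-1`. -/
def IsShiftOf {A : Type} {r : ℕ} (s t : Fin r → A) : Prop :=
  ∀ (i : ℕ) (h : i + 1 < r), s ⟨i + 1, h⟩ = t ⟨i, Nat.lt_of_succ_lt h⟩

/-- The shift graph `Sh_r(A)` on a linear order `A`: vertices are strictly increasing
`r`-tuples from `A`, and distinct vertices `s, t` are adjacent iff one is the shift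
of the other. -/
def ShiftGraph (A : Type) [LinearOrder A] (r : ℕ) :
    SimpleGraph {s : Fin r → A // StrictMono s} where
  Adj s t := s ≠ t ∧ (IsShiftOf s.1 t.1 ∨ IsShiftOf t.1 s.1)
  symm := by
    constructor
    rintro s t ⟨hne, h⟩
    exact ⟨hne.symm, h.symm⟩
  loopless := by
    constructor
    rintro s ⟨hne, -⟩
    exact hne rfl

/-- The symmetric shift graph `Sh_r^sym(A)` on a set `A`: vertices are `r`-tuples of
pairwise distinct elements of `A`, and distinct vertices `s, t` are adjacent iff one
is the shift of the other. -/
def SymShiftGraph (A : Type) (r : ℕ) :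
    SimpleGraph {s : Fin r → A // Function.Injective s} where
  Adj s t := s ≠ t ∧ (IsShiftOf s.1 t.1 ∨ IsShiftOf t.1 s.1)
  symm := by
    constructor
    rintro s t ⟨hne, h⟩
    exact ⟨hne.symm, h.symm⟩
  loopless := by
    constructor
    rintro s ⟨hne, -⟩
    exact hne rfl

open FirstOrder FirstOrder.Language


open FirstOrder FirstOrder.Language

namespace StmtAux

variable {α β : Type}

/-- `p` is the graph of a finite partial bijection. -/
def Compat (p : Finset (α × β)) : Prop :=
  ∀ ⦃a b a' b'⦄, (a, b) ∈ p → (a', b') ∈ p → (a = a' ↔ b = b')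

open scoped Classical in
lemma Compat.swap {p : Finset (α × β)} (hp : Compat p) :
    Compat (p.image Prod.swap) := by
  intro a b a' b' h h'
  simp only [Finset.mem_image, Prod.ext_iff] at h h'
  obtain ⟨⟨x, y⟩, hxy, hx, hy⟩ := h
  obtain ⟨⟨x', y'⟩, hxy', hx', hy'⟩ := h'
  subst hx hy hx' hy'
  exact (hp hxy hxy').symm

/-- Extension lemma: any finite partial bijection can be extended to cover
an injective tuple on the `β` side, producing an injective tuple on the `α` side. -/
lemma extend [Infinite α] {p : Finset (α × β)} (hp : Compat p) {r : ℕ}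
    {w : Fin r → β} (hw : Function.Injective w) :
    ∃ (q : Finset (α × β)) (v : Fin r → α), p ⊆ q ∧ Compat q ∧
      Function.Injective v ∧ ∀ j, (v j, w j) ∈ q := by
  classical
  set S : Finset α := p.image Prod.fst with hS
  have hSc : (↑S : Set α)ᶜ.Infinite := (S.finite_toSet).infinite_compl
  obtain g := hSc.natEmbedding
  have hg : ∀ n : ℕ, (g n : α) ∉ S := fun n => (g n).2
  have hginj : ∀ m n : ℕ, (g m : α) = g n → m = n := fun m n h =>
    g.injective (Subtype.ext h)
  set v : Fin r → α := fun j =>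
    if h : ∃ a, (a, w j) ∈ p then h.choose else g j with hv
  -- key transfer property against old pairs
  have key : ∀ (j : Fin r) (a : α) (b : β), (a, b) ∈ p → (v j = a ↔ w j = b) := by
    intro j a b hab
    by_cases h : ∃ a', (a', w j) ∈ p
    · have hc := h.choose_spec
      have : v j = h.choose := by simp [hv, h]
      rw [this]
      exact hp hc hab
    · have hvj : v j = g j := by simp [hv, h]
      constructor
      · intro he
        exact absurd (hvj ▸ he ▸ Finset.mem_image_of_mem Prod.fst hab) (hg j)
      · intro he
        exact absurd ⟨a, he ▸ hab⟩ h
  have hvinj : Function.Injective v := by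
    intro j k hjk
    by_contra hne
    have hwne : w j ≠ w k := fun h => hne (hw h)
    by_cases hj : ∃ a', (a', w j) ∈ p <;> by_cases hk : ∃ a', (a', w k) ∈ p
    · have := (key j _ _ hk.choose_spec).1 (by simp [hv, hj, hk] at hjk ⊢; exact hjk)
      exact hwne ((key j _ _ hj.choose_spec).1 (by simp [hv, hj]) ▸ this ▸ rfl)
    · have hvk : v k = g k := by simp [hv, hk]
      have hvj : v j = hj.choose := by simp [hv, hj]
      exact hg k (hvk ▸ hjk ▸ hvj ▸ Finset.mem_image_of_mem Prod.fst hj.choose_spec)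
    · have hvj : v j = g j := by simp [hv, hj]
      have hvk : v k = hk.choose := by simp [hv, hk]
      exact hg j (hvj ▸ hjk ▸ hvk ▸ Finset.mem_image_of_mem Prod.fst hk.choose_spec)
    · have : (g j : α) = g k := by
        have hvj : v j = g j := by simp [hv, hj]
        have hvk : v k = g k := by simp [hv, hk]
        rw [← hvj, ← hvk, hjk]
      exact hne (Fin.ext (hginj j k this))
  have keynew : ∀ j k : Fin r, v j = v k ↔ w j = w k := by
    intro j k
    constructor
    · intro h; exact congrArg w (hvinj h)
    · intro h; exact congrArg v (hw h)
  refine ⟨p ∪ Finset.image (fun j => (v j, w j)) Finset.univ, v, Finset.subset_union_left,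
    ?_, hvinj, fun j => Finset.mem_union_right _ (Finset.mem_image_of_mem _ (Finset.mem_univ j))⟩
  intro a b a' b' h h'
  rw [Finset.mem_union] at h h'
  rcases h with h | h <;> rcases h' with h' | h'
  · exact hp h h'
  · simp only [Finset.mem_image, Prod.ext_iff] at h'
    obtain ⟨j, -, hj1, hj2⟩ := h'
    subst hj1 hj2
    exact ⟨fun e => ((key j a b h).1 e.symm).symm, fun e => ((key j a b h).2 e.symm).symm⟩
  · simp only [Finset.mem_image, Prod.ext_iff] at h
    obtain ⟨j, -, hj1, hj2⟩ := h
    subst hj1 hj2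
    exact key j a' b' h'
  · simp only [Finset.mem_image, Prod.ext_iff] at h h'
    obtain ⟨j, -, hj1, hj2⟩ := h
    obtain ⟨k, -, hk1, hk2⟩ := h'
    subst hj1 hj2 hk1 hk2
    exact keynew j k

end StmtAux

namespace StmtAux2

open StmtAux

variable {A B : Type} {r : ℕ}

/-- The tuples `v` and `w` are related coordinatewise by the partial bijection `p`. -/
def TRel (p : Finset (A × B)) (v : {s : Fin r → A // Function.Injective s})
    (w : {s : Fin r → B // Function.Injective s}) : Prop :=
  ∀ j, (v.1 j, w.1 j) ∈ p

lemma eq_iff {p : Finset (A × B)} (hp : Compat p)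
    {v v' : {s : Fin r → A // Function.Injective s}}
    {w w' : {s : Fin r → B // Function.Injective s}}
    (h : TRel p v w) (h' : TRel p v' w') : v = v' ↔ w = w' := by
  rw [Subtype.ext_iff, Subtype.ext_iff, funext_iff, funext_iff]
  exact forall_congr' fun j => hp (h j) (h' j)

lemma shift_iff {p : Finset (A × B)} (hp : Compat p)
    {v v' : {s : Fin r → A // Function.Injective s}}
    {w w' : {s : Fin r → B // Function.Injective s}}
    (h : TRel p v w) (h' : TRel p v' w') : IsShiftOf v.1 v'.1 ↔ IsShiftOf w.1 w'.1 := by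
  unfold IsShiftOf
  refine forall_congr' fun i => forall_congr' fun hi => ?_
  exact hp (h ⟨i + 1, hi⟩) (h' ⟨i, Nat.lt_of_succ_lt hi⟩)

lemma adj_iff {p : Finset (A × B)} (hp : Compat p)
    {v v' : {s : Fin r → A // Function.Injective s}}
    {w w' : {s : Fin r → B // Function.Injective s}}
    (h : TRel p v w) (h' : TRel p v' w') :
    (SymShiftGraph A r).Adj v v' ↔ (SymShiftGraph B r).Adj w w' := by
  show (v ≠ v' ∧ _) ↔ (w ≠ w' ∧ _)
  exact and_congr (not_congr (eq_iff hp h h'))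
    (or_congr (shift_iff hp h h') (shift_iff hp h' h))

lemma term_eq {n : ℕ} (t : Language.graph.Term (Empty ⊕ Fin n)) :
    ∃ i : Fin n, t = FirstOrder.Language.Term.var (Sum.inr i) := by
  cases t with
  | var x =>
    cases x with
    | inl e => exact e.elim
    | inr i => exact ⟨i, rfl⟩
  | func f ts => exact f.elim

lemma main [Infinite A] [Infinite B] {n : ℕ} (φ : Language.graph.BoundedFormula Empty n) :
    ∀ (p : Finset (A × B)), Compat p →
    ∀ (v : Fin n → {s : Fin r → A // Function.Injective s})
      (w : Fin n → {s : Fin r → B // Function.Injective s}),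
      (∀ i, TRel p (v i) (w i)) →
    ∀ (eA : Empty → {s : Fin r → A // Function.Injective s})
      (eB : Empty → {s : Fin r → B // Function.Injective s}),
      (@FirstOrder.Language.BoundedFormula.Realize Language.graph _
        (SymShiftGraph A r).structure Empty n φ eA v ↔
       @FirstOrder.Language.BoundedFormula.Realize Language.graph _
        (SymShiftGraph B r).structure Empty n φ eB w) := by
  letI := (SymShiftGraph A r).structure
  letI := (SymShiftGraph B r).structure
  induction φ with
  | falsum => exact fun _ _ _ _ _ _ _ => Iff.rfl
  | equal t₁ t₂ =>
    intro p hp v w h eA eB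
    obtain ⟨i₁, rfl⟩ := term_eq t₁
    obtain ⟨i₂, rfl⟩ := term_eq t₂
    exact eq_iff hp (h i₁) (h i₂)
  | rel R ts =>
    intro p hp v w h eA eB
    cases R with
    | adj =>
      obtain ⟨i₀, h₀⟩ := term_eq (ts 0)
      obtain ⟨i₁, h₁⟩ := term_eq (ts 1)
      show (SymShiftGraph A r).Adj ((ts 0).realize (Sum.elim eA v))
          ((ts 1).realize (Sum.elim eA v)) ↔
        (SymShiftGraph B r).Adj ((ts 0).realize (Sum.elim eB w))
          ((ts 1).realize (Sum.elim eB w))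
      rw [h₀, h₁]
      exact adj_iff hp (h i₀) (h i₁)
  | imp φ ψ ihφ ihψ =>
    intro p hp v w h eA eB
    exact imp_congr (ihφ p hp v w h eA eB) (ihψ p hp v w h eA eB)
  | all ψ ih =>
    intro p hp v w h eA eB
    constructor
    · intro H w'
      obtain ⟨q, v', hq, hcq, hvinj, hrel⟩ := extend hp w'.2
      refine (ih q hcq (Fin.snoc v ⟨v', hvinj⟩) (Fin.snoc w w') ?_ eA eB).1 (H ⟨v', hvinj⟩)
      intro i
      refine Fin.lastCases ?_ (fun i => ?_) i
      · simp only [Fin.snoc_last]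
        exact hrel
      · simp only [Fin.snoc_castSucc]
        exact fun j => hq (h i j)
    · intro H v'
      obtain ⟨q, w', hq, hcq, hwinj, hrel⟩ := extend hp.swap v'.2
      classical
      refine (ih (q.image Prod.swap) hcq.swap (Fin.snoc v v') (Fin.snoc w ⟨w', hwinj⟩)
        ?_ eA eB).2 (H ⟨w', hwinj⟩)
      intro i
      refine Fin.lastCases ?_ (fun i => ?_) i
      · simp only [Fin.snoc_last]
        intro j
        exact Finset.mem_image.2 ⟨(w' j, v'.1 j), hrel j, rfl⟩
      · simp only [Fin.snoc_castSucc]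
        intro j
        exact Finset.mem_image.2
          ⟨(w i |>.1 j, v i |>.1 j), hq (Finset.mem_image.2 ⟨_, h i j, rfl⟩), rfl⟩

end StmtAux2

theorem stmt_13 (r : ℕ) (hr : 1 ≤ r) (A B : Type) (hA : Infinite A) (hB : Infinite B) :
    @ElementarilyEquivalent Language.graph
      {s : Fin r → A // Function.Injective s} {s : Fin r → B // Function.Injective s}
      (SymShiftGraph A r).structure (SymShiftGraph B r).structure := by
  letI := (SymShiftGraph A r).structure
  letI := (SymShiftGraph B r).structure
  rw [elementarilyEquivalent_iff]
  intro φ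
  have hemp : StmtAux.Compat (∅ : Finset (A × B)) := by
    intro a b a' b' h
    exact absurd h (Finset.notMem_empty _)
  exact StmtAux2.main φ ∅ hemp default default (fun i => i.elim0) default default
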